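/- arXiv:1610.07379 — 3 statements merged into one kernel-verified Lean document; each statement's English description precedes it below -/
import Mathlib

section
/- Let X be a finite type, let g : Finset X → ℝ be normalized, monotone, and submodular, and let c : X → ℝ be a positive cost function. Suppose x* ∈ X maximizes the benefit-cost ratio g({x}) / c(x) over all x ∈ X. Then for every finite set S ⊆ X, g({x*}) ≥ (c(x*) / (∑_{x ∈ S} c(x))) · g(S). -/
/-- Greedy benefit-cost guarantee for normalized monotone submodular functions:
the point maximizing `g {x} / c x` satisfies `g {x*} ≥ (c x* / c(S)) * g S` for every set `S`. -/
theorem stmt_0 {X : Type*} [Fintype X] [DecidableEq X]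
    (g : Finset X → ℝ) (c : X → ℝ)
    (hnorm : g ∅ = 0)
    (hmono : ∀ S T : Finset X, S ⊆ T → g S ≤ g T)
    (hsub : ∀ (S T : Finset X) (x : X), S ⊆ T → x ∉ T →
      g (insert x T) - g T ≤ g (insert x S) - g S)
    (hc : ∀ x : X, 0 < c x)
    (xstar : X)
    (hmax : ∀ x : X, g {x} / c x ≤ g {xstar} / c xstar) :
    ∀ S : Finset X, (c xstar / ∑ x ∈ S, c x) * g S ≤ g {xstar} := by
  have hstar0 : 0 ≤ g {xstar} := hnorm ▸ hmono ∅ {xstar} (Finset.empty_subset _)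
  have hsubadd : ∀ S : Finset X, g S ≤ ∑ x ∈ S, g {x} := by
    intro S
    induction S using Finset.induction_on with
    | empty => simp [hnorm]
    | @insert a s hx ih =>
      rw [Finset.sum_insert hx]
      have h := hsub ∅ s a (Finset.empty_subset _) hx
      simp only [hnorm, sub_zero, Finset.insert_empty] at h
      linarith
  intro S
  rcases S.eq_empty_or_nonempty with rfl | hS
  · simp [hnorm, hstar0]
  · have hcs : 0 < ∑ x ∈ S, c x := Finset.sum_pos (fun x _ => hc x) hS
    rw [div_mul_eq_mul_div, div_le_iff₀ hcs]
    have h1 : g S ≤ ∑ x ∈ S, (g {xstar} / c xstar) * c x := by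
      refine (hsubadd S).trans (Finset.sum_le_sum fun x _ => ?_)
      rw [← div_le_iff₀ (hc x)]
      exact hmax x
    rw [← Finset.mul_sum] at h1
    have hcx := hc xstar
    calc c xstar * g S ≤ c xstar * ((g {xstar} / c xstar) * ∑ x ∈ S, c x) := by
          exact mul_le_mul_of_nonneg_left h1 hcx.le
      _ = g {xstar} * ∑ x ∈ S, c x := by field_simp
end

section
/- Let D be a finite set, let f, l, u : D → ℝ satisfy l(x) ≤ f(x) ≤ u(x) for all x ∈ D, let δ̄ ≥ 0 and η > 0, let M' ⊆ D, and suppose u(x) − l(x) ≤ 2(1 + δ̄)η for all x ∈ M'. Define M = {x ∈ M' : u(x) ≥ max_{x̄ ∈ M'} l(x̄)}. If x* ∈ M' is a maximizer of f over D, then x* ∈ M, and moreover every x ∈ M satisfies f(x) ≥ f(x*) − 4(1 + δ̄)η. -/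
/-- BO set update: if all confidence intervals on `M'` have width at most `2(1+δ̄)η`
and `M` keeps the points of `M'` whose upper bound is at least every lower bound on `M'`,
then any maximizer `x*` of `f` lying in `M'` remains in `M`, and every point of `M` is
at most `4(1+δ̄)η`-suboptimal. -/
theorem stmt_5 {D : Type*} [Fintype D] [DecidableEq D]
    (f l u : D → ℝ)
    (hconf : ∀ x : D, l x ≤ f x ∧ f x ≤ u x)
    (δbar η : ℝ) (hδ : 0 ≤ δbar) (hη : 0 < η)
    (M' : Finset D)
    (hwidth : ∀ x ∈ M', u x - l x ≤ 2 * (1 + δbar) * η)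
    (M : Finset D)
    (hM : M = M'.filter fun x => ∀ xbar ∈ M', l xbar ≤ u x)
    (xstar : D) (hxstar : xstar ∈ M') (hmax : ∀ y : D, f y ≤ f xstar) :
    xstar ∈ M ∧ ∀ x ∈ M, f xstar - 4 * (1 + δbar) * η ≤ f x := by
  subst hM
  constructor
  · refine Finset.mem_filter.mpr ⟨hxstar, fun xbar _ => ?_⟩
    exact le_trans (hconf xbar).1 (le_trans (hmax xbar) (hconf xstar).2)
  · intro x hx
    obtain ⟨hxM', hx⟩ := Finset.mem_filter.mp hx
    have h1 := hx xstar hxstar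
    have h2 := hwidth x hxM'
    have h3 := hwidth xstar hxstar
    have := (hconf x).1
    have := (hconf xstar).2
    linarith
end

section
/- Let t ≥ 1, let x₁, …, x_t, x_{t+1}, x̄ be points of a set D, let k : D × D → ℝ be a symmetric kernel such that the (t+2)×(t+2) matrix [k(·,·)] over the tuple (x₁, …, x_{t+1}, x̄) is positive semidefinite, and let σ²(x₁), …, σ²(x_{t+1}) > 0 be noise variances. Then the posterior variance after t+1 observations satisfies the rank-one update identity σ_{t+1}²(x̄) = σ_t²(x̄) − Cov_t(x̄, x_{t+1})² / (σ²(x_{t+1}) + σ_t²(x_{t+1})), where σ_s²(x) = k(x,x) − k_s(x)ᵀ (K_s + Σ_s)^{−1} k_s(x) and Cov_t(x̄, x) = k(x̄, x) − k_t(x̄)ᵀ (K_t + Σ_t)^{−1} k_t(x). In particular, σ_{t+1}²(x̄) ≤ σ_t²(x̄). -/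
open Matrix

/-- The Gaussian process posterior variance
`σ_s²(x) = k(x,x) - k_s(x)ᵀ (K_s + Σ_s)⁻¹ k_s(x)`. -/
noncomputable def postVar {D : Type*} {n : ℕ} (k : D → D → ℝ) (xs : Fin n → D)
    (σ2 : Fin n → ℝ) (x : D) : ℝ :=
  k x x - (fun i => k (xs i) x) ⬝ᵥ
    (((Matrix.of fun i j => k (xs i) (xs j)) + Matrix.diagonal σ2)⁻¹ *ᵥ fun i => k (xs i) x)

/-- The Gaussian process posterior covariance
`Cov_s(a, b) = k(a,b) - k_s(a)ᵀ (K_s + Σ_s)⁻¹ k_s(b)`. -/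
noncomputable def postCov {D : Type*} {n : ℕ} (k : D → D → ℝ) (xs : Fin n → D)
    (σ2 : Fin n → ℝ) (a b : D) : ℝ :=
  k a b - (fun i => k (xs i) a) ⬝ᵥ
    (((Matrix.of fun i j => k (xs i) (xs j)) + Matrix.diagonal σ2)⁻¹ *ᵥ fun i => k (xs i) b)

/-- Rank-one update of the posterior variance upon observing the `(t+1)`-st point:
`σ_{t+1}²(x̄) = σ_t²(x̄) - Cov_t(x̄, x_{t+1})² / (σ²(x_{t+1}) + σ_t²(x_{t+1}))`;
in particular, the posterior variance is non-increasing. -/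
theorem stmt_16 {D : Type*} (t : ℕ) (ht : 1 ≤ t) (xs : Fin (t + 1) → D) (xbar : D)
    (k : D → D → ℝ) (hsymm : ∀ a b : D, k a b = k b a)
    (hPSD : (Matrix.of fun i j : Fin (t + 2) =>
      k ((Fin.snoc xs xbar : Fin (t + 2) → D) i)
        ((Fin.snoc xs xbar : Fin (t + 2) → D) j)).PosSemidef)
    (σ2 : Fin (t + 1) → ℝ) (hσ2 : ∀ i, 0 < σ2 i) :
    postVar k xs σ2 xbar =
      postVar k (fun i : Fin t => xs i.castSucc) (fun i => σ2 i.castSucc) xbar -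
        (postCov k (fun i : Fin t => xs i.castSucc) (fun i => σ2 i.castSucc) xbar
            (xs (Fin.last t))) ^ 2 /
          (σ2 (Fin.last t) +
            postVar k (fun i : Fin t => xs i.castSucc) (fun i => σ2 i.castSucc)
              (xs (Fin.last t))) ∧
    postVar k xs σ2 xbar ≤
      postVar k (fun i : Fin t => xs i.castSucc) (fun i => σ2 i.castSucc) xbar := by
  classical
  set xl := xs (Fin.last t) with hxl
  set σ2' : Fin t → ℝ := fun i => σ2 i.castSucc with hσ2'
  set A : Matrix (Fin t) (Fin t) ℝ :=
    (Matrix.of fun i j => k (xs i.castSucc) (xs j.castSucc)) + Matrix.diagonal σ2' with hA_def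
  set b : Fin t → ℝ := fun i => k (xs i.castSucc) xl with hb
  set u : Fin t → ℝ := fun i => k (xs i.castSucc) xbar with hu
  set c : ℝ := k xl xl + σ2 (Fin.last t) with hc
  -- the kernel matrix over `Fin t ⊕ Fin 1` for points `(x₁,…,x_t, x_{t+1})`
  set ys : Fin t ⊕ Fin 1 → D := Sum.elim (fun i => xs i.castSucc) (fun _ => xl) with hys
  have hKys : (Matrix.of fun p q : Fin t ⊕ Fin 1 => k (ys p) (ys q)).PosSemidef := by
    have := hPSD.submatrix
      (Sum.elim (fun i : Fin t => (i.castSucc.castSucc : Fin (t+2)))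
        (fun _ : Fin 1 => ((Fin.last t).castSucc : Fin (t+2))))
    convert this using 2
    ext p q
    rcases p with p | p <;> rcases q with q | q <;>
      simp [Matrix.submatrix, Fin.snoc_castSucc, hys, hxl]
  have hKt : (Matrix.of fun i j : Fin t => k (xs i.castSucc) (xs j.castSucc)).PosSemidef := by
    have := hKys.submatrix (Sum.inl : Fin t → Fin t ⊕ Fin 1)
    convert this using 2
    ext i j
    rfl
  have hA : A.PosDef := by
    rw [hA_def]
    exact Matrix.PosDef.posSemidef_add hKt (Matrix.PosDef.diagonal fun i => hσ2 i.castSucc)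
  have hAdet : IsUnit A.det := isUnit_iff_ne_zero.mpr hA.det_pos.ne'
  haveI : Invertible A := A.invertibleOfIsUnitDet hAdet
  have hAsymm : Aᵀ = A := by
    rw [hA_def, Matrix.transpose_add, Matrix.diagonal_transpose]
    congr 1
    ext i j
    exact hsymm (xs j.castSucc) (xs i.castSucc)
  have hAinvsymm : (A⁻¹)ᵀ = A⁻¹ := by rw [Matrix.transpose_nonsing_inv, hAsymm]
  have hdot_comm : ∀ x y : Fin t → ℝ, x ⬝ᵥ A⁻¹ *ᵥ y = y ⬝ᵥ A⁻¹ *ᵥ x := by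
    intro x y
    rw [Matrix.dotProduct_mulVec, ← Matrix.mulVec_transpose, hAinvsymm, dotProduct_comm]
  -- nonnegativity of the Schur complement at `x_{t+1}`
  have hschur : 0 ≤ k xl xl - b ⬝ᵥ A⁻¹ *ᵥ b := by
    have hH : (Matrix.fromBlocks A (Matrix.replicateCol (Fin 1) b) (Matrix.replicateCol (Fin 1) b)ᴴ
        (Matrix.of fun _ _ : Fin 1 => k xl xl)).PosSemidef := by
      have h1 : (Matrix.fromBlocks A (Matrix.replicateCol (Fin 1) b) (Matrix.replicateCol (Fin 1) b)ᴴ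
          (Matrix.of fun _ _ : Fin 1 => k xl xl)) =
          (Matrix.of fun p q : Fin t ⊕ Fin 1 => k (ys p) (ys q)) +
            Matrix.diagonal (Sum.elim σ2' (fun _ => 0)) := by
        ext p q
        rcases p with p | p <;> rcases q with q | q
        · simp [Matrix.fromBlocks, hA_def, Matrix.diagonal, hys]
        · simp [Matrix.fromBlocks, hys, hb, Matrix.diagonal]
        · simp [Matrix.fromBlocks, hys, hb, Matrix.diagonal,
            Matrix.conjTranspose_apply, hsymm xl (xs q.castSucc)]
        · rw [Fin.eq_zero p, Fin.eq_zero q]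
          simp [Matrix.fromBlocks, hys, Matrix.diagonal]
      rw [h1]
      exact hKys.add (Matrix.PosSemidef.diagonal (by rintro (i | i) <;>
        simp [hσ2', (hσ2 _).le]))
    have hstarb : star b = b := funext fun i => star_trivial _
    have hBAB : (Matrix.replicateCol (Fin 1) b)ᴴ * A⁻¹ * Matrix.replicateCol (Fin 1) b =
        Matrix.of fun _ _ : Fin 1 => b ⬝ᵥ A⁻¹ *ᵥ b := by
      rw [Matrix.conjTranspose_replicateCol, hstarb, Matrix.mul_assoc, ← Matrix.replicateCol_mulVec,
        Matrix.replicateRow_mul_replicateCol]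
    have h2 := (Matrix.posSemidef_iff_dotProduct_mulVec.mp ((Matrix.PosDef.fromBlocks₁₁ _ _ hA).mp hH)).2 (fun _ => (1 : ℝ))
    rw [hBAB] at h2
    simpa [Matrix.mulVec, dotProduct, Fin.sum_univ_one, Matrix.sub_apply] using h2
  set s : ℝ := c - b ⬝ᵥ A⁻¹ *ᵥ b with hs_def
  have hs : 0 < s := by
    have : s = σ2 (Fin.last t) + (k xl xl - b ⬝ᵥ A⁻¹ *ᵥ b) := by rw [hs_def, hc]; ring
    rw [this]
    exact add_pos_of_pos_of_nonneg (hσ2 _) hschur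
  set γ : ℝ := k xbar xl - u ⬝ᵥ A⁻¹ *ᵥ b with hγ
  -- the bordered matrix over `Fin t ⊕ Fin 1`
  set M : Matrix (Fin t ⊕ Fin 1) (Fin t ⊕ Fin 1) ℝ :=
    Matrix.fromBlocks A (Matrix.replicateCol (Fin 1) b) (Matrix.replicateRow (Fin 1) b)
      (Matrix.of fun _ _ => c) with hM_def
  have hM : M.PosDef := by
    have h1 : M = (Matrix.of fun p q : Fin t ⊕ Fin 1 => k (ys p) (ys q)) +
        Matrix.diagonal (Sum.elim σ2' (fun _ => σ2 (Fin.last t))) := by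
      ext p q
      rcases p with p | p <;> rcases q with q | q
      · simp [hM_def, Matrix.fromBlocks, hA_def, Matrix.diagonal, hys]
      · simp [hM_def, Matrix.fromBlocks, hys, hb, Matrix.diagonal]
      · simp [hM_def, Matrix.fromBlocks, hys, hb, Matrix.diagonal,
          hsymm xl (xs q.castSucc)]
      · rw [Fin.eq_zero p, Fin.eq_zero q]
        simp [hM_def, Matrix.fromBlocks, hys, hc, Matrix.diagonal]
    rw [h1]
    exact Matrix.PosDef.posSemidef_add hKys
      (Matrix.PosDef.diagonal (by rintro (i | i) <;> simp [hσ2', hσ2 _]))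
  have hMdet : IsUnit M.det := isUnit_iff_ne_zero.mpr hM.det_pos.ne'
  -- the solution of `M z = v`
  set z : Fin t ⊕ Fin 1 → ℝ :=
    Sum.elim (A⁻¹ *ᵥ u - (γ / s) • (A⁻¹ *ᵥ b)) (fun _ => γ / s) with hz
  set v : Fin t ⊕ Fin 1 → ℝ := Sum.elim u (fun _ => k xl xbar) with hv
  have hMz : M *ᵥ z = v := by
    rw [hM_def, hz, Matrix.fromBlocks_mulVec]
    simp only [Sum.elim_comp_inl, Sum.elim_comp_inr]
    have htop : A *ᵥ (A⁻¹ *ᵥ u - (γ / s) • (A⁻¹ *ᵥ b)) +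
        Matrix.replicateCol (Fin 1) b *ᵥ (fun _ => γ / s) = u := by
      have h1 : A *ᵥ (A⁻¹ *ᵥ u) = u := by
        rw [Matrix.mulVec_mulVec, Matrix.mul_nonsing_inv _ hAdet, Matrix.one_mulVec]
      have h2 : A *ᵥ (A⁻¹ *ᵥ b) = b := by
        rw [Matrix.mulVec_mulVec, Matrix.mul_nonsing_inv _ hAdet, Matrix.one_mulVec]
      have h3 : Matrix.replicateCol (Fin 1) b *ᵥ (fun _ => γ / s) = (γ / s) • b := by
        funext i
        simp [Matrix.mulVec, dotProduct, Fin.sum_univ_one, Matrix.replicateCol, mul_comm]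
      rw [Matrix.mulVec_sub, Matrix.mulVec_smul, h1, h2, h3]
      abel
    have hbot : Matrix.replicateRow (Fin 1) b *ᵥ (A⁻¹ *ᵥ u - (γ / s) • (A⁻¹ *ᵥ b)) +
        (Matrix.of fun _ _ : Fin 1 => c) *ᵥ (fun _ => γ / s) = fun _ => k xl xbar := by
      funext i
      have h4 : b ⬝ᵥ (A⁻¹ *ᵥ u) = k xbar xl - γ := by
        rw [hdot_comm b u, hγ]; ring
      have h5 : b ⬝ᵥ ((γ / s) • (A⁻¹ *ᵥ b)) = (γ / s) * (b ⬝ᵥ A⁻¹ *ᵥ b) := by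
        rw [dotProduct_smul, smul_eq_mul]
      have h6 : (Matrix.replicateRow (Fin 1) b *ᵥ (A⁻¹ *ᵥ u - (γ / s) • (A⁻¹ *ᵥ b))) i =
          b ⬝ᵥ (A⁻¹ *ᵥ u) - b ⬝ᵥ ((γ / s) • (A⁻¹ *ᵥ b)) := by
        simp [Matrix.mulVec, Matrix.replicateRow, dotProduct_sub]
      have h7 : ((Matrix.of fun _ _ : Fin 1 => c) *ᵥ (fun _ => γ / s)) i = c * (γ / s) := by
        simp [Matrix.mulVec, dotProduct, Fin.sum_univ_one]
      rw [Pi.add_apply, h6, h7, h4, h5]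
      have : c = s + b ⬝ᵥ A⁻¹ *ᵥ b := by rw [hs_def]; ring
      rw [this, hsymm xbar xl]
      field_simp
      ring
    rw [htop, hbot, hv]
  have hMinv : M⁻¹ *ᵥ v = z := by
    rw [← hMz, Matrix.mulVec_mulVec, Matrix.nonsing_inv_mul _ hMdet, Matrix.one_mulVec]
  -- the value of the quadratic form
  have hquad : v ⬝ᵥ M⁻¹ *ᵥ v = u ⬝ᵥ A⁻¹ *ᵥ u + γ ^ 2 / s := by
    rw [hMinv, hv, hz, sumElim_dotProduct_sumElim]
    have h8 : u ⬝ᵥ (A⁻¹ *ᵥ u - (γ / s) • (A⁻¹ *ᵥ b)) =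
        u ⬝ᵥ A⁻¹ *ᵥ u - (γ / s) * (u ⬝ᵥ A⁻¹ *ᵥ b) := by
      rw [dotProduct_sub, dotProduct_smul, smul_eq_mul]
    have h9 : (fun _ : Fin 1 => k xl xbar) ⬝ᵥ (fun _ => γ / s) = k xl xbar * (γ / s) := by
      simp [dotProduct, Fin.sum_univ_one]
    rw [h8, h9]
    have h10 : u ⬝ᵥ A⁻¹ *ᵥ b = k xbar xl - γ := by rw [hγ]; ring
    rw [h10, hsymm xl xbar]
    field_simp
    ring
  -- transporting the `(t+1)`-dimensional quantities to `Fin t ⊕ Fin 1`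
  set e : Fin t ⊕ Fin 1 ≃ Fin (t + 1) := finSumFinEquiv with he
  have he_inl : ∀ i : Fin t, e (Sum.inl i) = i.castSucc := fun i => rfl
  have he_inr : ∀ j : Fin 1, e (Sum.inr j) = Fin.last t := by
    intro j
    rw [Fin.eq_zero j]
    rfl
  set M' : Matrix (Fin (t+1)) (Fin (t+1)) ℝ :=
    (Matrix.of fun i j => k (xs i) (xs j)) + Matrix.diagonal σ2 with hM'_def
  have hM'sub : M' = M.submatrix e.symm e.symm := by
    have h1 : M = M'.submatrix e e := by
      ext p q
      rcases p with p | p <;> rcases q with q | q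
      · simp [hM_def, hM'_def, Matrix.fromBlocks, Matrix.submatrix, he_inl,
          Matrix.diagonal, hA_def, hσ2', Fin.castSucc_inj]
      · simp [hM_def, hM'_def, Matrix.fromBlocks, Matrix.submatrix, he_inl, he_inr,
          Matrix.diagonal, hb, hxl, (Fin.castSucc_lt_last p).ne]
      · simp [hM_def, hM'_def, Matrix.fromBlocks, Matrix.submatrix, he_inl, he_inr,
          Matrix.diagonal, hb, hxl, hsymm (xs (Fin.last t)) (xs q.castSucc), (Fin.castSucc_lt_last q).ne']
      · rw [Fin.eq_zero p, Fin.eq_zero q]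
        simp [hM_def, hM'_def, Matrix.fromBlocks, Matrix.submatrix, he_inr,
          Matrix.diagonal, hc, hxl]
    rw [h1, Matrix.submatrix_submatrix]
    simp
  set v' : Fin (t+1) → ℝ := fun i => k (xs i) xbar with hv'
  have hv'e : v' ∘ e = v := by
    funext p
    rcases p with p | p
    · simp [hv', hv, he_inl, hu]
    · simp [hv', hv, he_inr, hxl]
  have hquad' : v' ⬝ᵥ M'⁻¹ *ᵥ v' = v ⬝ᵥ M⁻¹ *ᵥ v := by
    rw [hM'sub, Matrix.inv_submatrix_equiv, Matrix.submatrix_mulVec_equiv]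
    have : v' ∘ e.symm.symm = v := by simpa using hv'e
    rw [this]
    show ∑ i, v' i * (M⁻¹ *ᵥ v) (e.symm i) = _
    rw [← Equiv.sum_comp e (fun i => v' i * (M⁻¹ *ᵥ v) (e.symm i))]
    simp only [Equiv.symm_apply_apply]
    rw [← hv'e]
    rfl
  -- identify the pieces with `postVar`/`postCov`
  have hPV1 : postVar k xs σ2 xbar = k xbar xbar - (u ⬝ᵥ A⁻¹ *ᵥ u + γ ^ 2 / s) := by
    have h0 : postVar k xs σ2 xbar = k xbar xbar - v' ⬝ᵥ M'⁻¹ *ᵥ v' := rfl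
    rw [h0, hquad', hquad]
  have hPVt : postVar k (fun i : Fin t => xs i.castSucc) (fun i => σ2 i.castSucc) xbar =
      k xbar xbar - u ⬝ᵥ A⁻¹ *ᵥ u := rfl
  have hPVl : postVar k (fun i : Fin t => xs i.castSucc) (fun i => σ2 i.castSucc) xl =
      k xl xl - b ⬝ᵥ A⁻¹ *ᵥ b := rfl
  have hCov : postCov k (fun i : Fin t => xs i.castSucc) (fun i => σ2 i.castSucc) xbar xl = γ :=
    rfl
  have hdenom : σ2 (Fin.last t) +
      postVar k (fun i : Fin t => xs i.castSucc) (fun i => σ2 i.castSucc) xl = s := by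
    rw [hPVl, hs_def, hc]; ring
  constructor
  · rw [hPV1, hPVt, hCov, hdenom]
    ring
  · rw [hPV1, hPVt]
    have : 0 ≤ γ ^ 2 / s := div_nonneg (sq_nonneg _) hs.le
    linarith
end
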